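/- Let k be a field of characteristic p, R = k[x₁, …, x_n], and let κ : R → R be the additive map defined on monomials by κ(x₁^{a₁}⋯x_n^{a_n}) = x₁^{(a₁+1)/p − 1}⋯x_n^{(a_n+1)/p − 1} when all (a_i + 1) are divisible by p, and 0 otherwise (extended p^{-1}-semilinearly over k when k is perfect; over 𝔽_p extended additively). Fix 0 ≤ s ≤ p−2 and consider the twisted operator κ_s(m) = κ(x₁^s m). Then for every nonzero monomial g = x₁^{e₁}⋯x_n^{e_n} there exist e ≥ 1 and a monomial m such that κ_s^{e}(m·g) = 1. (In contrast, for s = p−1 one has κ_{p−1}^e(R·x₁) ⊆ x₁·R for all e, so no such m exists with g = x₁.) -/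

import Mathlib

open MvPolynomial

private def Gs (p e : ℕ) : ℕ := ∑ j ∈ Finset.range e, p ^ j

private lemma Gs_succ (p e : ℕ) : Gs p (e + 1) = p * Gs p e + 1 := geom_sum_succ

private lemma Gs_mul (p : ℕ) (hp2 : 2 ≤ p) (e : ℕ) : (p - 1) * Gs p e + 1 = p ^ e := by
  induction e with
  | zero => simp [Gs]
  | succ e ih =>
    obtain ⟨q, rfl⟩ : ∃ q, p = q + 1 := ⟨p - 1, by omega⟩
    rw [Gs_succ, pow_succ, ← ih]
    simp only [Nat.add_sub_cancel] at *
    ring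

private lemma le_Gs (p : ℕ) (hp2 : 2 ≤ p) (e : ℕ) : e ≤ Gs p e := by
  induction e with
  | zero => simp [Gs]
  | succ e ih =>
    rw [Gs_succ]
    have : Gs p e ≤ p * Gs p e := Nat.le_mul_of_pos_left _ (by omega)
    omega

private noncomputable def Aexp (p n s : ℕ) (hn : 0 < n) (e : ℕ) : Fin n →₀ ℕ :=
  Finsupp.equivFunOnFinite.symm fun i =>
    p ^ e - 1 - if i = (⟨0, hn⟩ : Fin n) then s * Gs p e else 0

private lemma Aexp_apply (p n s : ℕ) (hn : 0 < n) (e : ℕ) (i : Fin n) :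
    Aexp p n s hn e i = p ^ e - 1 - if i = (⟨0, hn⟩ : Fin n) then s * Gs p e else 0 := by
  simp [Aexp]

/-- For the Cartier operator `κ` on `𝔽_p[x₁,…,x_n]` and `0 ≤ s ≤ p-2`, the twist
`κ_s(q) = κ(x₁^s q)` is "strongly surjective": for every monomial `x^g` there are
`e ≥ 1` and a monomial `x^b` with `κ_s^e(x^b · x^g) = 1`.  In contrast, for
`s = p-1` one has `κ_{p-1}^e(R·x₁) ⊆ x₁·R` for all `e`. -/
theorem stmt_19 (p n : ℕ) (hp : p.Prime) (hn : 0 < n) (s : ℕ) (hs : s ≤ p - 2)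
    (κ : MvPolynomial (Fin n) (ZMod p) →ₗ[ZMod p] MvPolynomial (Fin n) (ZMod p))
    (hκ : ∀ a : Fin n →₀ ℕ, κ (monomial a 1) =
      if ∀ i : Fin n, p ∣ (a i + 1) then
        monomial (Finsupp.equivFunOnFinite.symm fun i => (a i + 1) / p - 1) 1
      else 0) :
    (∀ g : Fin n →₀ ℕ, ∃ e : ℕ, 1 ≤ e ∧ ∃ b : Fin n →₀ ℕ,
      (fun q => κ ((X (⟨0, hn⟩ : Fin n)) ^ s * q))^[e]
        (monomial b 1 * monomial g 1) = 1) ∧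
    (∀ (e : ℕ) (f : MvPolynomial (Fin n) (ZMod p)),
      (fun q => κ ((X (⟨0, hn⟩ : Fin n)) ^ (p - 1) * q))^[e]
          (f * X (⟨0, hn⟩ : Fin n)) ∈
        Ideal.span {(X (⟨0, hn⟩ : Fin n) : MvPolynomial (Fin n) (ZMod p))}) := by
  have hp2 : 2 ≤ p := hp.two_le
  set i0 : Fin n := ⟨0, hn⟩ with hi0def
  -- basic bound : s * Gs + Gs + 1 ≤ p ^ e
  have hT : ∀ e : ℕ, s * Gs p e + Gs p e + 1 ≤ p ^ e := by
    intro e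
    have h1 : (s + 1) * Gs p e ≤ (p - 1) * Gs p e :=
      Nat.mul_le_mul_right _ (by omega)
    have h2 := Gs_mul p hp2 e
    nlinarith [h1, h2]
  constructor
  · -- Part 1
    -- the key step computation
    have step : ∀ e : ℕ,
        κ (X i0 ^ s * monomial (Aexp p n s hn (e + 1)) 1) = monomial (Aexp p n s hn e) 1 := by
      intro e
      rw [X_pow_eq_monomial, monomial_mul, one_mul, hκ]
      have hstep : ∀ i : Fin n,
          (Finsupp.single i0 s + Aexp p n s hn (e + 1)) i + 1 =
            p * (p ^ e - if i = i0 then s * Gs p e else 0) := by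
        intro i
        rw [Finsupp.add_apply, Finsupp.single_apply, Aexp_apply]
        have hTe := hT e
        have hTe1 := hT (e + 1)
        have hmul1 : s * Gs p (e + 1) = p * (s * Gs p e) + s := by
          rw [Gs_succ]; ring
        have hpow : p * p ^ e = p ^ (e + 1) := (pow_succ' p e).symm
        have hc : p * (p ^ e - s * Gs p e) + p * (s * Gs p e) = p * p ^ e := by
          rw [← Nat.mul_add]
          congr 1
          omega
        have hc0 : p * (p ^ e - 0) + 0 = p * p ^ e := by simp
        by_cases hii : i = i0
        · simp only [if_pos hii, if_pos (show i0 = i from hii.symm), if_pos (show i = ⟨0, hn⟩ from hii)]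
          omega
        · simp only [if_neg hii, if_neg (fun h : i0 = i => hii h.symm), if_neg (show ¬ i = ⟨0, hn⟩ from hii)]
          omega
      have hdvd : ∀ i : Fin n, p ∣ (Finsupp.single i0 s + Aexp p n s hn (e + 1)) i + 1 :=
        fun i => Dvd.intro _ (hstep i).symm
      rw [if_pos hdvd]
      have hidx : (Finsupp.equivFunOnFinite.symm fun i =>
            ((Finsupp.single i0 s + Aexp p n s hn (e + 1)) i + 1) / p - 1) =
          Aexp p n s hn e := by
        ext i
        rw [Finsupp.coe_equivFunOnFinite_symm, Aexp_apply, hstep i,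
          Nat.mul_div_cancel_left _ hp.pos, Nat.sub_right_comm]
      rw [hidx]
    -- iterating the key step
    have key1 : ∀ e : ℕ,
        (fun q => κ (X i0 ^ s * q))^[e] (monomial (Aexp p n s hn e) 1) = 1 := by
      intro e
      induction e with
      | zero =>
        simp only [Function.iterate_zero, id_eq]
        have hA0 : Aexp p n s hn 0 = 0 := by
          ext i
          rw [Aexp_apply]
          simp [Gs]
        rw [hA0, monomial_zero', C_1]
      | succ e ih =>
        rw [Function.iterate_succ_apply, step e, ih]
    intro g
    set M : ℕ := ∑ i, g i with hM
    refine ⟨M + 1, le_add_self, ?_⟩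
    have hgle : ∀ i : Fin n, g i ≤ Aexp p n s hn (M + 1) i := by
      intro i
      have h1 : g i ≤ M := Finset.single_le_sum (fun _ _ => Nat.zero_le _) (Finset.mem_univ i)
      have h2 := hT (M + 1)
      have h3 := le_Gs p hp2 (M + 1)
      rw [Aexp_apply]
      split <;> omega
    refine ⟨Finsupp.equivFunOnFinite.symm fun i => Aexp p n s hn (M + 1) i - g i, ?_⟩
    have hbg : (Finsupp.equivFunOnFinite.symm fun i => Aexp p n s hn (M + 1) i - g i) + g =
        Aexp p n s hn (M + 1) := by
      ext i
      rw [Finsupp.add_apply, Finsupp.coe_equivFunOnFinite_symm]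
      exact Nat.sub_add_cancel (hgle i)
    rw [monomial_mul, one_mul, hbg]
    exact key1 (M + 1)
  · -- Part 2
    -- semilinearity : κ (X^p * h) = X * κ h
    have hsemi : ∀ h : MvPolynomial (Fin n) (ZMod p), κ (X i0 ^ p * h) = X i0 * κ h := by
      intro h
      induction h using MvPolynomial.induction_on' with
      | add f g hf hg => rw [mul_add, map_add, hf, hg, map_add, mul_add]
      | monomial u a =>
        have h1 : (X i0 : MvPolynomial (Fin n) (ZMod p)) ^ p * monomial u a =
            monomial (Finsupp.single i0 p + u) a := by
          rw [X_pow_eq_monomial, monomial_mul, one_mul]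
        have h2 : (monomial (Finsupp.single i0 p + u)) (a : ZMod p) =
            a • monomial (Finsupp.single i0 p + u) (1 : ZMod p) := by
          rw [smul_monomial, smul_eq_mul, mul_one]
        have h3 : (monomial u) (a : ZMod p) = a • monomial u (1 : ZMod p) := by
          rw [smul_monomial, smul_eq_mul, mul_one]
        rw [h1, h2, h3, map_smul, map_smul, hκ, hκ, mul_smul_comm]
        have happ : ∀ i : Fin n, (Finsupp.single i0 p + u) i =
            (if i = i0 then p else 0) + u i := by
          intro i
          rw [Finsupp.add_apply, Finsupp.single_apply]
          by_cases hii : i = i0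
          · rw [if_pos hii.symm, if_pos hii]
          · rw [if_neg (Ne.symm hii), if_neg hii]
        by_cases hc : ∀ i : Fin n, p ∣ u i + 1
        · have hc' : ∀ i : Fin n, p ∣ (Finsupp.single i0 p + u) i + 1 := by
            intro i
            rw [happ i]
            split
            · obtain ⟨c, hcc⟩ := hc i
              exact ⟨c + 1, by have hmul : p * (c + 1) = p * c + p := Nat.mul_succ p c; omega⟩
            · simpa using hc i
          have hX1 : (X i0 : MvPolynomial (Fin n) (ZMod p)) = monomial (Finsupp.single i0 1) 1 := by
            rw [← X_pow_eq_monomial, pow_one]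
          have hidx : (Finsupp.equivFunOnFinite.symm fun i =>
                ((Finsupp.single i0 p + u) i + 1) / p - 1) =
              Finsupp.single i0 1 + (Finsupp.equivFunOnFinite.symm fun i => (u i + 1) / p - 1) := by
            ext i
            rw [Finsupp.add_apply, Finsupp.single_apply,
              Finsupp.coe_equivFunOnFinite_symm, Finsupp.coe_equivFunOnFinite_symm,
              happ i]
            obtain ⟨c, hcc⟩ := hc i
            have hcpos : 0 < c := by rcases c with _ | c <;> omega
            by_cases hii : i = i0
            · rw [if_pos hii, if_pos hii.symm]
              have e1 : p + u i + 1 = p * (c + 1) := by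
                have hmul : p * (c + 1) = p * c + p := Nat.mul_succ p c
                omega
              rw [e1, hcc, Nat.mul_div_cancel_left _ hp.pos, Nat.mul_div_cancel_left _ hp.pos]
              omega
            · rw [if_neg hii, if_neg (Ne.symm hii)]
              simp only [zero_add]
          rw [if_pos hc, if_pos hc', hX1, monomial_mul, one_mul, hidx]
        · have hc' : ¬ ∀ i : Fin n, p ∣ (Finsupp.single i0 p + u) i + 1 := by
            intro hall
            apply hc
            intro i
            have := hall i
            rw [happ i] at this
            by_cases hii : i = i0
            · rw [if_pos hii] at this
              obtain ⟨c, hcc⟩ := this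
              have hcpos : 0 < c := by nlinarith [hp.pos]
              rcases c with _ | c
              · omega
              · exact ⟨c, by have hmul : p * (c + 1) = p * c + p := Nat.mul_succ p c; omega⟩
            · rwa [if_neg hii, zero_add] at this
          rw [if_neg hc, if_neg hc']
          simp
    have key2 : ∀ (e : ℕ) (q : MvPolynomial (Fin n) (ZMod p)),
        X i0 ∣ q → X i0 ∣ (fun q => κ (X i0 ^ (p - 1) * q))^[e] q := by
      intro e
      induction e with
      | zero => intro q hq; simpa using hq
      | succ e ih =>
        rintro q ⟨h, rfl⟩
        rw [Function.iterate_succ_apply]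
        apply ih
        show X i0 ∣ κ (X i0 ^ (p - 1) * (X i0 * h))
        have hrw : (X i0 : MvPolynomial (Fin n) (ZMod p)) ^ (p - 1) * (X i0 * h) =
            X i0 ^ p * h := by
          rw [← mul_assoc, ← pow_succ, Nat.sub_add_cancel hp.one_le]
        rw [hrw, hsemi]
        exact Dvd.intro _ rfl
    intro e f
    rw [Ideal.mem_span_singleton]
    exact key2 e _ (Dvd.intro_left _ rfl)
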